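/- Let M be a finite monoid with idempotent exponent ω. M satisfies (n*m)^ω * n = (n*m)^ω = m * (n*m)^ω for all m, n ∈ M if and only if M satisfies n^ω * m = n^ω = m * n^ω for all m ⊑ n. -/

import Mathlib

def Subword {M : Type*} [Monoid M] (m n : M) : Prop :=
  ∃ (ps : List (M × M)) (last : M),
    n = (ps.map fun p => p.1 * p.2).prod * last ∧ m = (ps.map Prod.snd).prod

theorem stmt_4 (M : Type*) [Monoid M] [Fintype M] (ω : ℕ) (hω : 0 < ω)
    (hid : ∀ x : M, IsIdempotentElem (x ^ ω)) :
    (∀ m n : M, (n * m) ^ ω * n = (n * m) ^ ω ∧ m * (n * m) ^ ω = (n * m) ^ ω) ↔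
    (∀ m n : M, Subword m n → n ^ ω * m = n ^ ω ∧ m * n ^ ω = n ^ ω) := by
  constructor
  · rintro hA m n ⟨ps, last, hn, hm⟩
    have key : ∀ p ∈ ps, n ^ ω * p.2 = n ^ ω ∧ p.2 * n ^ ω = n ^ ω := by
      intro p hp
      obtain ⟨s, t, rfl⟩ := List.append_of_mem hp
      set x := (s.map fun q => q.1 * q.2).prod with hx
      set y := (t.map fun q => q.1 * q.2).prod * last with hy
      have hn1 : n = (x * (p.1 * p.2)) * y := by
        rw [hn, hy, hx]
        simp [List.prod_append, mul_assoc]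
      have hn2 : n = (x * p.1) * (p.2 * y) := by
        rw [hn1]; simp [mul_assoc]
      have h1 := hA y (x * (p.1 * p.2))
      rw [← hn1] at h1
      have h2 := hA (p.2 * y) (x * p.1)
      rw [← hn2] at h2
      constructor
      · calc n ^ ω * p.2 = (n ^ ω * (x * p.1)) * p.2 := by rw [h2.1]
          _ = n ^ ω * (x * (p.1 * p.2)) := by rw [mul_assoc, mul_assoc]
          _ = n ^ ω := h1.1
      · calc p.2 * n ^ ω = p.2 * (y * n ^ ω) := by rw [h1.2]
          _ = (p.2 * y) * n ^ ω := (mul_assoc _ _ _).symm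
          _ = n ^ ω := h2.2
    subst hm
    clear hn
    induction ps with
    | nil => simp
    | cons q qs ih =>
      have hq := key q List.mem_cons_self
      have ih' := ih (fun p hp => key p (List.mem_cons_of_mem q hp))
      simp only [List.map_cons, List.prod_cons]
      constructor
      · rw [← mul_assoc, hq.1, ih'.1]
      · rw [mul_assoc, ih'.2, hq.2]
  · intro hS m n
    have h1 : Subword n (n * m) := ⟨[(1, n)], m, by simp⟩
    have h2 : Subword m (n * m) := ⟨[(n, m)], 1, by simp⟩
    exact ⟨(hS n (n * m) h1).1, (hS m (n * m) h2).2⟩
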